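/- Let α ≥ 1, let ℓ ≥ 0 be an integer, let x₁, …, x_ℓ ∈ [0,1) with partial remainders r_i = 1 - ∑_{j<i} x_j satisfying r_i > 0 for all i = 1,…,ℓ+1. Suppose a sequence of independent events is defined where event i fails with probability min{max{(r_i/α - x_i)/(r_i/α), 0}, 1} (i.e., the chance an exponential clock of rate x_i does not beat an independent exponential clock of rate r_i/α - x_i when x_i < r_i/α, and 0 otherwise). Then the probability that all ℓ events fail (i.e., an element stays 'uncovered' through all ℓ arrivals) is at most (r_{ℓ+1})^α. -/

import Mathlib

open Real

lemma key_step (α r x : ℝ) (hα : 1 ≤ α) (hr : 0 < r) (hx : 0 ≤ x) (hrx : 0 < r - x) :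
    min (max ((r / α - x) / (r / α)) 0) 1 ≤ ((r - x) / r) ^ α := by
  have hα0 : (0:ℝ) < α := lt_of_lt_of_le one_pos hα
  have ht1 : x / r ≤ 1 := by
    rw [div_le_one hr]; linarith
  have htpos : 0 ≤ x / r := div_nonneg hx hr.le
  have hbern : 1 + α * (-(x/r)) ≤ (1 + (-(x/r))) ^ α :=
    one_add_mul_self_le_rpow_one_add (by linarith) hα
  have heq : (r / α - x) / (r / α) = 1 + α * (-(x/r)) := by
    field_simp
    ring
  have hrhs : (1 + (-(x/r))) = (r - x) / r := by
    field_simp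
    ring
  have hnn : (0:ℝ) ≤ ((r - x) / r) ^ α :=
    Real.rpow_nonneg (div_nonneg hrx.le hr.le) α
  calc min (max ((r / α - x) / (r / α)) 0) 1 ≤ max ((r / α - x) / (r / α)) 0 := min_le_left _ _
    _ ≤ ((r - x) / r) ^ α := by
        rw [heq]
        exact max_le (by rw [← hrhs]; exact hbern) hnn

/-- Since the events are independent, the probability that all `ℓ` events fail is the
product of the individual failure probabilities
`min (max ((r i / α - x i) / (r i / α)) 0) 1`. -/
theorem uncovered_probability_bound (α : ℝ) (hα : 1 ≤ α) (ℓ : ℕ)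
    (x : ℕ → ℝ) (hx : ∀ i, x i ∈ Set.Ico (0:ℝ) 1)
    (r : ℕ → ℝ) (hr : ∀ i, r i = 1 - ∑ j ∈ Finset.range i, x j)
    (hrpos : ∀ i ≤ ℓ, 0 < r i) :
    ∏ i ∈ Finset.range ℓ, min (max ((r i / α - x i) / (r i / α)) 0) 1
      ≤ (r ℓ) ^ α := by
  induction ℓ with
  | zero =>
      simp [hr 0, Real.one_rpow]
  | succ n ih =>
      have hrpos' : ∀ i ≤ n, 0 < r i := fun i hi => hrpos i (le_trans hi (Nat.le_succ n))
      have hrn : 0 < r n := hrpos' n le_rfl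
      have hrn1 : 0 < r (n+1) := hrpos (n+1) le_rfl
      have hstep : r (n+1) = r n - x n := by
        rw [hr (n+1), hr n, Finset.sum_range_succ]; ring
      have hterm : min (max ((r n / α - x n) / (r n / α)) 0) 1 ≤ ((r (n+1)) / r n) ^ α := by
        rw [hstep]
        exact key_step α (r n) (x n) hα hrn (hx n).1 (by rw [← hstep]; exact hrn1)
      rw [Finset.prod_range_succ]
      have hprodnn : (0:ℝ) ≤ ∏ i ∈ Finset.range n, min (max ((r i / α - x i) / (r i / α)) 0) 1 :=
        Finset.prod_nonneg fun i _ => le_min (le_max_right _ _) zero_le_one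
      have htermnn : (0:ℝ) ≤ min (max ((r n / α - x n) / (r n / α)) 0) 1 :=
        le_min (le_max_right _ _) zero_le_one
      calc (∏ i ∈ Finset.range n, min (max ((r i / α - x i) / (r i / α)) 0) 1) *
            min (max ((r n / α - x n) / (r n / α)) 0) 1
          ≤ (r n) ^ α * ((r (n+1)) / r n) ^ α :=
            mul_le_mul (ih hrpos') hterm htermnn (Real.rpow_nonneg hrn.le α)
        _ = (r (n+1)) ^ α := by
            rw [← Real.mul_rpow hrn.le (div_nonneg hrn1.le hrn.le),
              mul_div_cancel₀ _ (ne_of_gt hrn)]
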